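/- Let R be a commutative ring and let F(X,Y) ∈ R⟦X,Y⟧ be a one-dimensional commutative formal group law, i.e. F(X,0) = X, F(0,Y) = Y, F(X,Y) = F(Y,X), and F(F(X,Y),Z) = F(X,F(Y,Z)). Let ι(X) ∈ R⟦X⟧ be the formal inverse, the unique power series with zero constant term satisfying F(X, ι(X)) = 0. Then there exists a formal power series P(T) ∈ R⟦T⟧ with zero constant term such that X + ι(X) = P(X·ι(X)) holds in R⟦X⟧. -/

import Mathlib

open Finset

/-- Substitution of multivariate power series: `msubst F a` is the power series
`F(a)` obtained by substituting the series `a i` (which should have zero constant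
coefficient) for the `i`-th variable of `F`.  The `n`-th coefficient only involves
monomials of `F` of total degree at most `n`, which makes the following ad hoc
coefficientwise definition correct whenever every `a i` has zero constant
coefficient. -/
noncomputable def msubst {R : Type*} [CommRing R] {τ σ : Type*} [Fintype τ] [DecidableEq τ]
    (F : MvPowerSeries τ R) (a : τ → MvPowerSeries σ R) : MvPowerSeries σ R :=
  fun d => MvPowerSeries.coeff d
    (∑ e ∈ Finset.Iic (Finsupp.equivFunOnFinite.symm fun _ : τ => d.sum fun _ k => k),
      MvPowerSeries.coeff e F • ∏ i, a i ^ e i)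

/-- `F ∈ R⟦X,Y⟧` is a (one-dimensional, commutative) formal group law:
`F(X,0) = X`, `F(0,Y) = Y`, `F(X,Y) = F(Y,X)` and `F(F(X,Y),Z) = F(X,F(Y,Z))`. -/
def IsFormalGroupLaw {R : Type*} [CommRing R] (F : MvPowerSeries (Fin 2) R) : Prop :=
  msubst F ![PowerSeries.X, 0] = PowerSeries.X ∧
  msubst F ![0, PowerSeries.X] = PowerSeries.X ∧
  msubst F ![MvPowerSeries.X 1, MvPowerSeries.X 0] = F ∧
  msubst F ![msubst F ![(MvPowerSeries.X 0 : MvPowerSeries (Fin 3) R), MvPowerSeries.X 1],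
      MvPowerSeries.X 2] =
    msubst F ![(MvPowerSeries.X 0 : MvPowerSeries (Fin 3) R),
      msubst F ![MvPowerSeries.X 1, MvPowerSeries.X 2]]

set_option linter.unusedSectionVars false

namespace FGLaux

open MvPowerSeries

variable {R : Type*} [CommRing R] {σ τ : Type*} [Fintype τ] [DecidableEq τ] [DecidableEq σ]

/-- total degree of an exponent -/
def deg {σ : Type*} (d : σ →₀ ℕ) : ℕ := d.sum fun _ k => k

lemma deg_add (d e : σ →₀ ℕ) : deg (d + e) = deg d + deg e :=
  Finsupp.sum_add_index' (fun _ => rfl) (fun _ _ _ => rfl)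

lemma apply_le_deg (d : σ →₀ ℕ) (i : σ) : d i ≤ deg d := by
  by_cases hi : i ∈ d.support
  · have hdd : deg d = ∑ a ∈ d.support, d a := rfl
    exact hdd ▸ Finset.single_le_sum (f := fun a => d a) (fun _ _ => Nat.zero_le _) hi
  · simp [Finsupp.notMem_support_iff.mp hi]

lemma eq_zero_of_deg_eq_zero {d : σ →₀ ℕ} (h : deg d = 0) : d = 0 := by
  ext i
  simp only [Finsupp.coe_zero, Pi.zero_apply]
  have := apply_le_deg d i
  omega

lemma coeff_mul_eq_zero {f g : MvPowerSeries σ R} {k l : ℕ}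
    (hf : ∀ d, deg d < k → coeff d f = 0) (hg : ∀ d, deg d < l → coeff d g = 0)
    {d : σ →₀ ℕ} (hd : deg d < k + l) : coeff d (f * g) = 0 := by
  rw [coeff_mul]
  refine Finset.sum_eq_zero fun p hp => ?_
  rw [HasAntidiagonal.mem_antidiagonal] at hp
  have : deg p.1 + deg p.2 = deg d := by rw [← deg_add, hp]
  rcases lt_or_ge (deg p.1) k with h | h
  · rw [hf _ h, zero_mul]
  · rw [hg _ (by omega), mul_zero]

lemma coeff_pow_eq_zero {f : MvPowerSeries σ R} (hf : constantCoeff (σ := σ) (R := R) f = 0)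
    {m : ℕ} {d : σ →₀ ℕ} (hd : deg d < m) : coeff d (f ^ m) = 0 := by
  induction m generalizing d with
  | zero => omega
  | succ n ih =>
    rw [pow_succ]
    refine coeff_mul_eq_zero (k := n) (l := 1) (fun u hu => ih hu) (fun e he => ?_) hd
    have : e = 0 := eq_zero_of_deg_eq_zero (by omega)
    subst this
    exact hf

lemma coeff_prod_pow_eq_zero {a : τ → MvPowerSeries σ R}
    (ha : ∀ i, constantCoeff (σ := σ) (R := R) (a i) = 0) {e : τ →₀ ℕ} {j : τ} {d : σ →₀ ℕ}
    (hd : deg d < e j) : coeff d (∏ i, a i ^ e i) = 0 := by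
  rw [← Finset.mul_prod_erase (univ : Finset τ) _ (Finset.mem_univ j)]
  refine coeff_mul_eq_zero (k := e j) (l := 0)
    (fun u hu => coeff_pow_eq_zero (ha j) hu) (fun u hu => by omega) (by omega)

lemma coeff_msubst (F : MvPowerSeries τ R) (a : τ → MvPowerSeries σ R)
    (ha : ∀ i, constantCoeff (σ := σ) (R := R) (a i) = 0) (d : σ →₀ ℕ) {E : Finset (τ →₀ ℕ)}
    (hE : Finset.Iic (Finsupp.equivFunOnFinite.symm fun _ : τ => deg d) ⊆ E) :
    coeff d (msubst F a) = ∑ e ∈ E, coeff e F * coeff d (∏ i, a i ^ e i) := by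
  have h0 : coeff d (msubst F a) =
      ∑ e ∈ Finset.Iic (Finsupp.equivFunOnFinite.symm fun _ : τ => deg d),
        coeff e F * coeff d (∏ i, a i ^ e i) := by
    rw [MvPowerSeries.coeff_apply]
    show coeff d (∑ e ∈ Finset.Iic (Finsupp.equivFunOnFinite.symm fun _ : τ => deg d),
      coeff e F • ∏ i, a i ^ e i) = _
    rw [map_sum]
    exact Finset.sum_congr rfl fun e _ => by rw [LinearMap.map_smul, smul_eq_mul]
  rw [h0]
  refine Finset.sum_subset hE fun e _ he => ?_
  have : ¬ e ≤ (Finsupp.equivFunOnFinite.symm fun _ : τ => deg d) := by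
    simpa using he
  rw [Finsupp.le_def] at this
  push_neg at this
  obtain ⟨j, hj⟩ := this
  have hj' : deg d < e j := by simpa using hj
  rw [coeff_prod_pow_eq_zero ha hj', mul_zero]

noncomputable abbrev box (τ : Type*) [Fintype τ] [DecidableEq τ] (N : ℕ) : Finset (τ →₀ ℕ) :=
  Finset.Iic (Finsupp.equivFunOnFinite.symm fun _ : τ => N)

lemma mem_box {N : ℕ} {e : τ →₀ ℕ} : e ∈ box τ N ↔ ∀ i, e i ≤ N := by
  simp only [box, Finset.mem_Iic, Finsupp.le_def, Finsupp.equivFunOnFinite_symm_apply_apply]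

lemma box_subset_box {M N : ℕ} (h : M ≤ N) : box τ M ⊆ box τ N := fun e he =>
  mem_box.mpr fun i => le_trans (mem_box.mp he i) h

lemma coeff_msubst' (F : MvPowerSeries τ R) (a : τ → MvPowerSeries σ R)
    (ha : ∀ i, constantCoeff (σ := σ) (R := R) (a i) = 0) (d : σ →₀ ℕ) {N : ℕ} (hN : deg d ≤ N) :
    coeff d (msubst F a) = ∑ e ∈ box τ N, coeff e F * coeff d (∏ i, a i ^ e i) :=
  coeff_msubst F a ha d (box_subset_box hN)

lemma coeff_prod_pow_eq_zero' {a : τ → MvPowerSeries σ R}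
    (ha : ∀ i, constantCoeff (σ := σ) (R := R) (a i) = 0) {e : τ →₀ ℕ} {d : σ →₀ ℕ} {N : ℕ}
    (hdN : deg d ≤ N) (he : e ∉ box τ N) : coeff d (∏ i, a i ^ e i) = 0 := by
  rw [mem_box] at he
  push_neg at he
  obtain ⟨j, hj⟩ := he
  exact coeff_prod_pow_eq_zero ha (j := j) (by omega)

lemma msubst_add (F G : MvPowerSeries τ R) (a : τ → MvPowerSeries σ R)
    (ha : ∀ i, constantCoeff (σ := σ) (R := R) (a i) = 0) :
    msubst (F + G) a = msubst F a + msubst G a := by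
  apply MvPowerSeries.ext; intro d
  rw [map_add, coeff_msubst' F a ha d le_rfl, coeff_msubst' G a ha d le_rfl,
    coeff_msubst' (F + G) a ha d le_rfl, ← Finset.sum_add_distrib]
  exact Finset.sum_congr rfl fun e _ => by rw [map_add, add_mul]

lemma msubst_neg (F : MvPowerSeries τ R) (a : τ → MvPowerSeries σ R)
    (ha : ∀ i, constantCoeff (σ := σ) (R := R) (a i) = 0) :
    msubst (-F) a = -msubst F a := by
  apply MvPowerSeries.ext; intro d
  rw [map_neg, coeff_msubst' F a ha d le_rfl, coeff_msubst' (-F) a ha d le_rfl,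
    ← Finset.sum_neg_distrib]
  exact Finset.sum_congr rfl fun e _ => by rw [map_neg, neg_mul]

lemma msubst_sub (F G : MvPowerSeries τ R) (a : τ → MvPowerSeries σ R)
    (ha : ∀ i, constantCoeff (σ := σ) (R := R) (a i) = 0) :
    msubst (F - G) a = msubst F a - msubst G a := by
  rw [sub_eq_add_neg, msubst_add _ _ _ ha, msubst_neg _ _ ha, sub_eq_add_neg]

lemma msubst_one (a : τ → MvPowerSeries σ R)
    (ha : ∀ i, constantCoeff (σ := σ) (R := R) (a i) = 0) :
    msubst (1 : MvPowerSeries τ R) a = 1 := by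
  apply MvPowerSeries.ext; intro d
  rw [coeff_msubst' 1 a ha d le_rfl,
    Finset.sum_eq_single (0 : τ →₀ ℕ) (fun e _ he => by rw [coeff_one, if_neg he, zero_mul])
      (fun h => absurd (mem_box.mpr fun i => by simp) h)]
  simp [coeff_one]

lemma msubst_X (i : τ) (a : τ → MvPowerSeries σ R)
    (ha : ∀ j, constantCoeff (σ := σ) (R := R) (a j) = 0) :
    msubst (X i : MvPowerSeries τ R) a = a i := by
  apply MvPowerSeries.ext; intro d
  rw [coeff_msubst' (X i) a ha d le_rfl]
  have hprod : (∏ j, a j ^ (Finsupp.single i 1) j) = a i := by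
    rw [Finset.prod_eq_single i (fun j _ hj => by rw [Finsupp.single_eq_of_ne hj, pow_zero])
      (fun h => absurd (Finset.mem_univ i) h)]
    rw [Finsupp.single_eq_same, pow_one]
  by_cases hmem : (Finsupp.single i 1 : τ →₀ ℕ) ∈ box τ (deg d)
  · rw [Finset.sum_eq_single_of_mem _ hmem
      (fun e _ he => by rw [coeff_X, if_neg he, zero_mul])]
    rw [coeff_X, if_pos rfl, one_mul, hprod]
  · have hd0 : d = 0 := by
      refine eq_zero_of_deg_eq_zero ?_
      by_contra h
      exact hmem (mem_box.mpr fun j => by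
        rcases eq_or_ne j i with rfl | hj
        · rw [Finsupp.single_eq_same]; omega
        · rw [Finsupp.single_eq_of_ne hj]; omega)
    have hz : ∀ e ∈ box τ (deg d), coeff e (X i) * coeff d (∏ j, a j ^ e j) = 0 := by
      intro e he
      rcases eq_or_ne e (Finsupp.single i 1) with rfl | hne
      · exact absurd he hmem
      · rw [coeff_X, if_neg hne, zero_mul]
    rw [Finset.sum_eq_zero hz, hd0]
    exact ((congrFun (coeff_zero_eq_constantCoeff (σ := σ) (R := R)) (a i)).trans (ha i)).symm

lemma prod_pow_add (a : τ → MvPowerSeries σ R) (u v : τ →₀ ℕ) :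
    (∏ i, a i ^ (u + v) i) = (∏ i, a i ^ u i) * ∏ i, a i ^ v i := by
  rw [← Finset.prod_mul_distrib]
  exact Finset.prod_congr rfl fun i _ => by rw [Finsupp.add_apply, pow_add]

lemma msubst_mul (F G : MvPowerSeries τ R) (a : τ → MvPowerSeries σ R)
    (ha : ∀ i, constantCoeff (σ := σ) (R := R) (a i) = 0) :
    msubst (F * G) a = msubst F a * msubst G a := by
  apply MvPowerSeries.ext; intro d
  have hL : coeff d (msubst (F * G) a) =
      ∑ p ∈ box τ (deg d) ×ˢ box τ (deg d),
        coeff p.1 F * coeff p.2 G * coeff d (∏ i, a i ^ (p.1 + p.2) i) := by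
    rw [coeff_msubst' (F * G) a ha d le_rfl]
    have step1 : ∀ e ∈ box τ (deg d), coeff e (F * G) * coeff d (∏ i, a i ^ e i) =
        ∑ p ∈ box τ (deg d) ×ˢ box τ (deg d),
          if p.1 + p.2 = e then
            coeff p.1 F * coeff p.2 G * coeff d (∏ i, a i ^ (p.1 + p.2) i) else 0 := by
      intro e he
      have hanti : HasAntidiagonal.antidiagonal e
          = (box τ (deg d) ×ˢ box τ (deg d)).filter (fun p => p.1 + p.2 = e) := by
        ext p
        simp only [HasAntidiagonal.mem_antidiagonal, Finset.mem_filter, Finset.mem_product]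
        constructor
        · intro h
          have h1 : ∀ i, p.1 i + p.2 i ≤ deg d := fun i => by
            have h2 := mem_box.mp he i
            rw [← h, Finsupp.add_apply] at h2
            exact h2
          exact ⟨⟨mem_box.mpr fun i => le_trans (Nat.le_add_right _ _) (h1 i),
                  mem_box.mpr fun i => le_trans (Nat.le_add_left _ _) (h1 i)⟩, h⟩
        · exact fun h => h.2
      rw [MvPowerSeries.coeff_mul, Finset.sum_mul, hanti, Finset.sum_filter]
      refine Finset.sum_congr rfl fun p _ => ?_
      split
      · next h => rw [h]
      · rfl
    rw [Finset.sum_congr rfl step1, Finset.sum_comm]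
    refine Finset.sum_congr rfl fun p hp => ?_
    rw [Finset.sum_ite_eq (box τ (deg d)) (p.1 + p.2)]
    split
    · rfl
    · next h => rw [coeff_prod_pow_eq_zero' ha le_rfl h, mul_zero]
  have hR : coeff d (msubst F a * msubst G a) =
      ∑ p ∈ box τ (deg d) ×ˢ box τ (deg d),
        coeff p.1 F * coeff p.2 G * coeff d (∏ i, a i ^ (p.1 + p.2) i) := by
    rw [MvPowerSeries.coeff_mul]
    have step1 : ∀ q ∈ HasAntidiagonal.antidiagonal d,
        coeff q.1 (msubst F a) * coeff q.2 (msubst G a) =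
        ∑ p ∈ box τ (deg d) ×ˢ box τ (deg d),
          coeff p.1 F * coeff p.2 G *
            (coeff q.1 (∏ i, a i ^ p.1 i) * coeff q.2 (∏ i, a i ^ p.2 i)) := by
      intro q hq
      rw [HasAntidiagonal.mem_antidiagonal] at hq
      have hdeg : deg q.1 + deg q.2 = deg d := by rw [← deg_add, hq]
      rw [coeff_msubst' F a ha q.1 (N := deg d) (by omega), coeff_msubst' G a ha q.2 (N := deg d) (by omega),
        Finset.sum_mul_sum, ← Finset.sum_product']
      exact Finset.sum_congr rfl fun p _ => by ring
    rw [Finset.sum_congr rfl step1, Finset.sum_comm]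
    refine Finset.sum_congr rfl fun p hp => ?_
    rw [← Finset.mul_sum, ← MvPowerSeries.coeff_mul, ← prod_pow_add]
  rw [hL, hR]

lemma msubst_pow (F : MvPowerSeries τ R) (a : τ → MvPowerSeries σ R)
    (ha : ∀ i, constantCoeff (σ := σ) (R := R) (a i) = 0) (n : ℕ) :
    msubst (F ^ n) a = msubst F a ^ n := by
  induction n with
  | zero => simpa using msubst_one a ha
  | succ m ih => rw [pow_succ, pow_succ, msubst_mul _ _ _ ha, ih]

lemma msubst_prod {ι : Type*} [DecidableEq ι] (s : Finset ι) (g : ι → MvPowerSeries τ R)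
    (a : τ → MvPowerSeries σ R) (ha : ∀ i, constantCoeff (σ := σ) (R := R) (a i) = 0) :
    msubst (∏ i ∈ s, g i) a = ∏ i ∈ s, msubst (g i) a := by
  induction s using Finset.induction with
  | empty => simpa using msubst_one a ha
  | insert _ _ hx ih => rw [Finset.prod_insert hx, Finset.prod_insert hx, msubst_mul _ _ _ ha, ih]

lemma msubst_prod_pow {τ' : Type*} [Fintype τ'] [DecidableEq τ'] (f : τ' →₀ ℕ) (b : τ' → MvPowerSeries τ R)
    (a : τ → MvPowerSeries σ R) (ha : ∀ i, constantCoeff (σ := σ) (R := R) (a i) = 0) :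
    msubst (∏ i, b i ^ f i) a = ∏ i, (msubst (b i) a) ^ f i := by
  rw [msubst_prod _ _ a ha]
  exact Finset.prod_congr rfl fun i _ => msubst_pow _ a ha _

lemma deg_zero : deg (0 : σ →₀ ℕ) = 0 := rfl

lemma constantCoeff_msubst (F : MvPowerSeries τ R) (a : τ → MvPowerSeries σ R)
    (ha : ∀ i, constantCoeff (σ := σ) (R := R) (a i) = 0) :
    constantCoeff (σ := σ) (R := R) (msubst F a) = constantCoeff (σ := τ) (R := R) F := by
  have h1 : coeff (0 : σ →₀ ℕ) (msubst F a) = constantCoeff (σ := τ) (R := R) F := by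
    rw [coeff_msubst' F a ha 0 (N := 0) le_rfl]
    rw [Finset.sum_eq_single (0 : τ →₀ ℕ)]
    · have : (∏ i, a i ^ (0 : τ →₀ ℕ) i) = 1 := by
        refine Finset.prod_eq_one fun i _ => by rw [Finsupp.coe_zero, Pi.zero_apply, pow_zero]
      rw [this, coeff_one, if_pos rfl, mul_one]
      exact congrFun (coeff_zero_eq_constantCoeff (σ := τ) (R := R)) F
    · intro e he hne
      exact absurd (Finsupp.ext fun i => Nat.le_zero.mp (mem_box.mp he i)) hne
    · intro h
      exact absurd (mem_box.mpr fun i => le_rfl) h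
  rw [← h1]
  exact (congrFun (coeff_zero_eq_constantCoeff (σ := σ) (R := R)) (msubst F a)).symm

lemma msubst_comp {τ' : Type*} [Fintype τ'] [DecidableEq τ'] [Nonempty τ]
    (G : MvPowerSeries τ' R) (b : τ' → MvPowerSeries τ R) (a : τ → MvPowerSeries σ R)
    (hb : ∀ i, constantCoeff (σ := τ) (R := R) (b i) = 0) (ha : ∀ i, constantCoeff (σ := σ) (R := R) (a i) = 0) :
    msubst (msubst G b) a = msubst G fun i => msubst (b i) a := by
  have ha' : ∀ i, constantCoeff (σ := σ) (R := R) (msubst (b i) a) = 0 := fun i => by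
    rw [constantCoeff_msubst _ _ ha]; exact hb i
  apply MvPowerSeries.ext; intro d
  have hNM : deg d ≤ Fintype.card τ * deg d :=
    le_trans (by omega) (Nat.mul_le_mul_right (deg d) Fintype.card_pos)
  have hdege : ∀ e ∈ box τ (deg d), deg e ≤ Fintype.card τ * deg d := by
    intro e he
    have h1 : deg e = ∑ i ∈ e.support, e i := rfl
    calc deg e ≤ ∑ _i ∈ e.support, deg d := by
          rw [h1]; exact Finset.sum_le_sum fun i _ => mem_box.mp he i
      _ = e.support.card * deg d := by rw [Finset.sum_const, smul_eq_mul]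
      _ ≤ Fintype.card τ * deg d := Nat.mul_le_mul_right (deg d) (Finset.card_le_univ _)
  rw [coeff_msubst' (msubst G b) a ha d le_rfl]
  have step1 : ∀ e ∈ box τ (deg d), coeff e (msubst G b) * coeff d (∏ i, a i ^ e i)
      = ∑ f ∈ box τ' (Fintype.card τ * deg d),
          coeff f G * coeff e (∏ i, b i ^ f i) * coeff d (∏ i, a i ^ e i) := by
    intro e he
    rw [coeff_msubst' G b hb e (hdege e he), Finset.sum_mul]
  rw [Finset.sum_congr rfl step1, Finset.sum_comm,
    coeff_msubst' G (fun i => msubst (b i) a) ha' d hNM]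
  refine Finset.sum_congr rfl fun f hf => ?_
  rw [← msubst_prod_pow f b a ha, coeff_msubst' (∏ i, b i ^ f i) a ha d le_rfl, Finset.mul_sum]
  exact Finset.sum_congr rfl fun e he => by ring

section Bridges

/-- the exponent (a, b) in `Fin 2 →₀ ℕ` -/
noncomputable def fe (a b : ℕ) : Fin 2 →₀ ℕ := Finsupp.equivFunOnFinite.symm ![a, b]

@[simp] lemma fe_apply0 (a b : ℕ) : fe a b 0 = a := rfl
@[simp] lemma fe_apply1 (a b : ℕ) : fe a b 1 = b := rfl

lemma fe_eta (e : Fin 2 →₀ ℕ) : fe (e 0) (e 1) = e := by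
  ext i
  fin_cases i
  · rfl
  · rfl

lemma fe_inj {a b a' b' : ℕ} (h : fe a b = fe a' b') : a = a' ∧ b = b' := by
  constructor
  · have := congrArg (fun e => Finsupp.toFun e 0) h; exact this
  · have := congrArg (fun e => Finsupp.toFun e 1) h; exact this

lemma deg_fe (a b : ℕ) : deg (fe a b) = a + b := by
  show Finsupp.sum _ _ = _
  rw [Finsupp.sum_fintype _ _ (fun _ => rfl), Fin.sum_univ_two]
  rfl

lemma fe_add (a b a' b' : ℕ) : fe a b + fe a' b' = fe (a + a') (b + b') := by
  ext i
  fin_cases i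
  · rfl
  · rfl

lemma fe_zero : fe 0 0 = 0 := by
  ext i
  fin_cases i
  · rfl
  · rfl

lemma fe_single0 : (Finsupp.single (0 : Fin 2) 1 : Fin 2 →₀ ℕ) = fe 1 0 := by
  ext i
  rw [Finsupp.single_apply]
  fin_cases i <;> simp

lemma mem_box_fe {i j N : ℕ} : fe i j ∈ box (Fin 2) N ↔ i ≤ N ∧ j ≤ N := by
  rw [mem_box]
  constructor
  · intro h; exact ⟨h 0, h 1⟩
  · intro h k
    fin_cases k
    · exact h.1
    · exact h.2

lemma sum_box_fe {M : Type*} [AddCommMonoid M] (N : ℕ) (φ : (Fin 2 →₀ ℕ) → M) :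
    ∑ e ∈ box (Fin 2) N, φ e =
      ∑ i ∈ Finset.range (N + 1), ∑ j ∈ Finset.range (N + 1), φ (fe i j) := by
  rw [← Finset.sum_product']
  refine Finset.sum_nbij' (fun e => (e 0, e 1)) (fun q => fe q.1 q.2) ?_ ?_ ?_ ?_ ?_
  · intro e he
    simp only [Finset.mem_product, Finset.mem_range]
    exact ⟨Nat.lt_succ_of_le (mem_box.mp he 0), Nat.lt_succ_of_le (mem_box.mp he 1)⟩
  · intro q hq
    simp only [Finset.mem_product, Finset.mem_range] at hq
    exact mem_box_fe.mpr ⟨Nat.lt_succ_iff.mp hq.1, Nat.lt_succ_iff.mp hq.2⟩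
  · intro e _; exact fe_eta e
  · intro q _; rfl
  · intro e _; rw [fe_eta]

/-- the exponent n in `Unit →₀ ℕ` -/
noncomputable def fu (n : ℕ) : Unit →₀ ℕ := Finsupp.single () n

@[simp] lemma fu_apply (n : ℕ) : fu n () = n := Finsupp.single_eq_same

lemma fu_eta (d : Unit →₀ ℕ) : fu (d ()) = d := by
  ext i
  exact Finsupp.single_eq_same

lemma deg_fu (n : ℕ) : deg (fu n) = n := Finsupp.sum_single_index rfl

lemma mem_box_fu {j N : ℕ} : fu j ∈ box Unit N ↔ j ≤ N := by
  rw [mem_box]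
  constructor
  · intro h; exact le_trans (le_of_eq (fu_apply j).symm) (h ())
  · intro h i; rw [show fu j i = j from Finsupp.single_eq_same]; exact h

lemma sum_box_fu {M : Type*} [AddCommMonoid M] (N : ℕ) (φ : (Unit →₀ ℕ) → M) :
    ∑ e ∈ box Unit N, φ e = ∑ j ∈ Finset.range (N + 1), φ (fu j) := by
  refine Finset.sum_nbij' (fun e => e ()) (fun j => fu j) ?_ ?_ ?_ ?_ ?_
  · intro e he
    exact Finset.mem_range.mpr (Nat.lt_succ_of_le (mem_box.mp he ()))
  · intro j hj
    exact mem_box_fu.mpr (Nat.lt_succ_iff.mp (Finset.mem_range.mp hj))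
  · intro e _; exact fu_eta e
  · intro j _; exact fu_apply j
  · intro e _; rw [fu_eta]

lemma coeff_mul_fe (f g : MvPowerSeries (Fin 2) R) (a b : ℕ) :
    MvPowerSeries.coeff (fe a b) (f * g) =
      ∑ i ∈ Finset.range (a + 1), ∑ j ∈ Finset.range (b + 1),
        MvPowerSeries.coeff (fe i j) f * MvPowerSeries.coeff (fe (a - i) (b - j)) g := by
  rw [MvPowerSeries.coeff_mul, ← Finset.sum_product']
  refine Finset.sum_nbij' (fun p => (p.1 0, p.1 1))
    (fun q => (fe q.1 q.2, fe (a - q.1) (b - q.2))) ?_ ?_ ?_ ?_ ?_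
  · intro p hp
    rw [HasAntidiagonal.mem_antidiagonal] at hp
    have h0 := congrArg (fun e => Finsupp.toFun e 0) hp
    have h1 := congrArg (fun e => Finsupp.toFun e 1) hp
    simp only [Finset.mem_product, Finset.mem_range]
    constructor
    · show p.1 0 < a + 1
      have : p.1 0 + p.2 0 = a := h0
      omega
    · show p.1 1 < b + 1
      have : p.1 1 + p.2 1 = b := h1
      omega
  · intro q hq
    simp only [Finset.mem_product, Finset.mem_range] at hq
    rw [HasAntidiagonal.mem_antidiagonal, fe_add]
    have := hq.1; have := hq.2
    congr 1 <;> omega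
  · intro p hp
    rw [HasAntidiagonal.mem_antidiagonal] at hp
    have h0 : p.1 0 + p.2 0 = a := congrArg (fun e => Finsupp.toFun e 0) hp
    have h1 : p.1 1 + p.2 1 = b := congrArg (fun e => Finsupp.toFun e 1) hp
    have e1 : fe (p.1 0) (p.1 1) = p.1 := fe_eta p.1
    have e2 : fe (a - p.1 0) (b - p.1 1) = p.2 := by
      rw [show a - p.1 0 = p.2 0 by omega, show b - p.1 1 = p.2 1 by omega]
      exact fe_eta p.2
    exact Prod.ext e1 e2
  · intro q _; rfl
  · intro p hp
    rw [HasAntidiagonal.mem_antidiagonal] at hp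
    have h0 : p.1 0 + p.2 0 = a := congrArg (fun e => Finsupp.toFun e 0) hp
    have h1 : p.1 1 + p.2 1 = b := congrArg (fun e => Finsupp.toFun e 1) hp
    rw [fe_eta p.1, show a - p.1 0 = p.2 0 by omega, show b - p.1 1 = p.2 1 by omega, fe_eta p.2]

end Bridges

section Symm

lemma X_pow_mul_X_pow (k m : ℕ) :
    (X 0 : MvPowerSeries (Fin 2) R) ^ k * (X 1) ^ m = monomial (fe k m) 1 := by
  rw [X_pow_eq, X_pow_eq, monomial_mul_monomial, one_mul]
  have hfe : (Finsupp.single (0 : Fin 2) k + Finsupp.single 1 m) = fe k m := by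
    ext i
    rw [Finsupp.add_apply, Finsupp.single_apply, Finsupp.single_apply]
    fin_cases i <;> simp
  rw [hfe]

lemma coeff_sigma_pow (i j a b : ℕ) :
    MvPowerSeries.coeff (fe a b) ((X 0 + X 1 : MvPowerSeries (Fin 2) R) ^ i * (X 0 * X 1) ^ j)
    = if i + 2 * j = a + b ∧ j ≤ a ∧ j ≤ b then (i.choose (a - j) : R) else 0 := by
  have h2 : ((X 0 * X 1 : MvPowerSeries (Fin 2) R)) ^ j = monomial (fe j j) 1 := by
    rw [mul_pow]; exact X_pow_mul_X_pow j j
  rw [add_pow, Finset.sum_mul, map_sum]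
  have hterm : ∀ k ∈ Finset.range (i + 1),
      MvPowerSeries.coeff (fe a b)
        ((X 0 : MvPowerSeries (Fin 2) R) ^ k * (X 1) ^ (i - k) *
          (i.choose k : MvPowerSeries (Fin 2) R) * ((X 0 * X 1) ^ j))
      = if k + j = a ∧ (i - k) + j = b then (i.choose k : R) else 0 := by
    intro k _
    rw [h2, X_pow_mul_X_pow, ← map_natCast ((C : R →+* MvPowerSeries (Fin 2) R)) (i.choose k)]
    rw [show monomial (fe k (i - k)) 1 * ((C : R →+* MvPowerSeries (Fin 2) R)) ((i.choose k : R)) * monomial (fe j j) 1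
        = ((C : R →+* MvPowerSeries (Fin 2) R)) ((i.choose k : R)) * (monomial (fe k (i - k)) 1 * monomial (fe j j) 1)
      from by ring]
    rw [monomial_mul_monomial, one_mul, coeff_C_mul, coeff_monomial, fe_add]
    rcases eq_or_ne (fe a b) (fe (k + j) ((i - k) + j)) with heq | hne
    · obtain ⟨h1, h2'⟩ := fe_inj heq
      rw [if_pos heq, if_pos ⟨h1.symm, h2'.symm⟩, mul_one]
    · rw [if_neg hne, if_neg, mul_zero]
      intro hcond
      exact hne (by rw [hcond.1, hcond.2])
  rw [Finset.sum_congr rfl hterm]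
  by_cases hP : i + 2 * j = a + b ∧ j ≤ a ∧ j ≤ b
  · rw [if_pos hP]
    obtain ⟨hab, hja, hjb⟩ := hP
    rw [Finset.sum_eq_single_of_mem (a - j) (Finset.mem_range.mpr (by omega))]
    · rw [if_pos ⟨by omega, by omega⟩]
    · intro k _ hne
      rw [if_neg]
      intro hcond
      exact hne (by omega)
  · rw [if_neg hP, Finset.sum_eq_zero]
    intro k hk
    rw [Finset.mem_range] at hk
    rw [if_neg]
    intro hcond
    exact hP ⟨by omega, by omega, by omega⟩

noncomputable def gdef (c : ℕ → ℕ → R) (j i : ℕ) : R :=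
  c (i + j) j - ∑ m ∈ (Finset.range j).attach,
    gdef c m.1 (i + 2 * (j - m.1)) * ((i + 2 * (j - m.1)).choose (i + (j - m.1)) : R)
termination_by j
decreasing_by exact Finset.mem_range.mp m.2

lemma gdef_eq (c : ℕ → ℕ → R) (j i : ℕ) : gdef c j i = c (i + j) j - ∑ m ∈ Finset.range j,
    gdef c m (i + 2 * (j - m)) * ((i + 2 * (j - m)).choose (i + (j - m)) : R) := by
  rw [gdef]
  congr 1
  exact Finset.sum_attach (Finset.range j)
    (fun m => gdef c m (i + 2 * (j - m)) * ((i + 2 * (j - m)).choose (i + (j - m)) : R))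

lemma sym_rep (c : ℕ → ℕ → R) (a b : ℕ) (hab : b ≤ a) :
    c a b = ∑ m ∈ Finset.range (b + 1),
      gdef c m (a + b - 2 * m) * ((a + b - 2 * m).choose (a - m) : R) := by
  rw [Finset.sum_range_succ]
  have h1 : a + b - 2 * b = a - b := by omega
  rw [h1, Nat.choose_self, Nat.cast_one, mul_one, gdef_eq]
  have h3 : (a - b) + b = a := by omega
  rw [h3]
  have h4 : ∀ m ∈ Finset.range b, gdef c m (a + b - 2 * m) * ((a + b - 2 * m).choose (a - m) : R)
      = gdef c m ((a - b) + 2 * (b - m)) * (((a - b) + 2 * (b - m)).choose ((a - b) + (b - m)) : R) := by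
    intro m hm
    have hm' := Finset.mem_range.mp hm
    rw [show (a - b) + 2 * (b - m) = a + b - 2 * m by omega, show (a - b) + (b - m) = a - m by omega]
  rw [Finset.sum_congr rfl h4]
  ring

lemma sym_rep' (c : ℕ → ℕ → R) (hsym : ∀ a b, c a b = c b a) (a b : ℕ) :
    c a b = ∑ m ∈ Finset.range (min a b + 1),
      gdef c m (a + b - 2 * m) * ((a + b - 2 * m).choose (a - m) : R) := by
  rcases le_total b a with h | h
  · rw [min_eq_right h]; exact sym_rep c a b h
  · rw [min_eq_left h, hsym, sym_rep c b a h]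
    refine Finset.sum_congr rfl fun m hm => ?_
    have hm' : m ≤ a := Nat.lt_succ_iff.mp (Finset.mem_range.mp hm)
    have hch : (a + b - 2 * m).choose (b - m) = (a + b - 2 * m).choose (a - m) := by
      have hle : b - m ≤ a + b - 2 * m := by omega
      have := Nat.choose_symm hle
      rw [show a + b - 2 * m - (b - m) = a - m by omega] at this
      exact this.symm
    rw [show b + a = a + b by omega, hch]

lemma msubst_G_eq (c : ℕ → ℕ → R) (hsym : ∀ a b, c a b = c b a)
    (F : MvPowerSeries (Fin 2) R) (hc : ∀ a b, MvPowerSeries.coeff (fe a b) F = c a b) :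
    msubst (fun e => gdef c (e 1) (e 0) : MvPowerSeries (Fin 2) R)
      ![X 0 + X 1, X 0 * X 1] = F := by
  have hσ : ∀ i, constantCoeff (σ := (Fin 2)) (R := R)
      ((![X 0 + X 1, X 0 * X 1] : Fin 2 → MvPowerSeries (Fin 2) R) i) = 0 := by
    intro i; fin_cases i <;> simp
  apply MvPowerSeries.ext; intro d
  rw [← fe_eta d]
  set a := d 0
  set b := d 1
  erw [coeff_msubst' _ _ hσ (fe a b) (N := a + b) (le_of_eq (deg_fe a b)), sum_box_fe,
    Finset.sum_comm]
  have hN : ∀ j ∈ Finset.range (a + b + 1),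
      (∑ i ∈ Finset.range (a + b + 1),
        MvPowerSeries.coeff (fe i j) (fun e => gdef c (e 1) (e 0) : MvPowerSeries (Fin 2) R) *
          MvPowerSeries.coeff (fe a b)
            (∏ k, (![X 0 + X 1, X 0 * X 1] : Fin 2 → MvPowerSeries (Fin 2) R) k ^ (fe i j) k))
      = if j ≤ a ∧ j ≤ b then
          gdef c j (a + b - 2 * j) * ((a + b - 2 * j).choose (a - j) : R) else 0 := by
    intro j _
    have hone : ∀ i : ℕ,
        MvPowerSeries.coeff (fe i j) (fun e => gdef c (e 1) (e 0) : MvPowerSeries (Fin 2) R) *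
          MvPowerSeries.coeff (fe a b)
            (∏ k, (![X 0 + X 1, X 0 * X 1] : Fin 2 → MvPowerSeries (Fin 2) R) k ^ (fe i j) k)
        = gdef c j i * (if i + 2 * j = a + b ∧ j ≤ a ∧ j ≤ b then (i.choose (a - j) : R) else 0) := by
      intro i
      have hpr : (∏ k, (![X 0 + X 1, X 0 * X 1] : Fin 2 → MvPowerSeries (Fin 2) R) k ^ (fe i j) k)
          = (X 0 + X 1 : MvPowerSeries (Fin 2) R) ^ i * (X 0 * X 1) ^ j := by
        rw [Fin.prod_univ_two]
        simp
      rw [hpr, coeff_sigma_pow]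
      rfl
    rw [Finset.sum_congr rfl fun i _ => hone i]
    by_cases hP : j ≤ a ∧ j ≤ b
    · rw [if_pos hP]
      rw [Finset.sum_eq_single_of_mem (a + b - 2 * j) (Finset.mem_range.mpr (by omega))]
      · rw [if_pos ⟨by omega, hP⟩]
      · intro i _ hne
        rw [if_neg, mul_zero]
        intro hcond
        exact hne (by omega)
    · rw [if_neg hP, Finset.sum_eq_zero]
      intro i _
      rw [if_neg, mul_zero]
      intro hcond
      exact hP ⟨hcond.2.1, hcond.2.2⟩
  rw [Finset.sum_congr rfl hN, hc, sym_rep' c hsym a b]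
  rw [← Finset.sum_subset (Finset.range_subset_range.mpr (show min a b + 1 ≤ a + b + 1 by omega))
    (fun j _ hj => if_neg (fun hco => hj (Finset.mem_range.mpr (by omega))))]
  exact Finset.sum_congr rfl fun j hj =>
    if_pos (by have := Finset.mem_range.mp hj; omega)

end Symm

section Weier

/-- Joint Weierstrass recursion: `wdef g j 0 = h j` and `wdef g j (i+1) = u i j`,
for the factorization `G = (S - h(E)) * U`, `G = Σ g i j S^i E^j`. -/
noncomputable def wdef (g : ℕ → ℕ → R) : ℕ → ℕ → R
  | j, 0 => if j = 0 then 0 else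
      - g 0 j - ∑ m ∈ (Finset.Icc 1 (j - 1)).attach, wdef g m.1 0 * wdef g (j - m.1) 1
  | j, (i + 1) => g (i + 1) j +
      ∑ m ∈ (Finset.Icc 1 j).attach, wdef g m.1 0 * wdef g (j - m.1) (i + 2)
termination_by j i => 2 * j + i
decreasing_by
  · have hm := Finset.mem_Icc.mp m.2
    omega
  · have hm := Finset.mem_Icc.mp m.2
    omega
  · have hm := Finset.mem_Icc.mp m.2
    omega
  · have hm := Finset.mem_Icc.mp m.2
    omega

lemma wdef_h0 (g : ℕ → ℕ → R) : wdef g 0 0 = 0 := by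
  rw [wdef]
  simp

lemma wdef_h (g : ℕ → ℕ → R) {j : ℕ} (hj : j ≠ 0) :
    wdef g j 0 = - g 0 j - ∑ m ∈ Finset.Icc 1 (j - 1), wdef g m 0 * wdef g (j - m) 1 := by
  rw [wdef, if_neg hj]
  congr 1
  exact Finset.sum_attach (Finset.Icc 1 (j - 1)) (fun m => wdef g m 0 * wdef g (j - m) 1)

lemma wdef_u (g : ℕ → ℕ → R) (j i : ℕ) :
    wdef g j (i + 1) = g (i + 1) j +
      ∑ m ∈ Finset.Icc 1 j, wdef g m 0 * wdef g (j - m) (i + 2) := by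
  rw [wdef]
  congr 1
  exact Finset.sum_attach (Finset.Icc 1 j) (fun m => wdef g m 0 * wdef g (j - m) (i + 2))

lemma Icc_one_insert {b : ℕ} (hb : 1 ≤ b) :
    Finset.Icc 1 b = insert b (Finset.Icc 1 (b - 1)) := by
  ext x
  simp only [Finset.mem_Icc, Finset.mem_insert]
  omega

lemma not_mem_Icc_one {b : ℕ} : b ∉ Finset.Icc 1 (b - 1) := by
  simp only [Finset.mem_Icc]
  omega

lemma sum_range_succ_eq_Icc (f : ℕ → R) (b : ℕ) :
    ∑ j ∈ Finset.range (b + 1), f j = f 0 + ∑ j ∈ Finset.Icc 1 b, f j := by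
  induction b with
  | zero => rw [Finset.Icc_eq_empty (by omega), Finset.sum_empty, add_zero, Finset.sum_range_one]
  | succ n ih =>
    rw [Finset.sum_range_succ, ih, Icc_one_insert (by omega : 1 ≤ n + 1),
      Finset.sum_insert not_mem_Icc_one, Nat.add_sub_cancel]
    ring

/-- `H(S,E) = h(E)` as a 2-variable series -/
noncomputable def Hser (g : ℕ → ℕ → R) : MvPowerSeries (Fin 2) R :=
  fun e => if e 0 = 0 then wdef g (e 1) 0 else 0

/-- `U(S,E)` as a 2-variable series -/
noncomputable def User (g : ℕ → ℕ → R) : MvPowerSeries (Fin 2) R :=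
  fun e => wdef g (e 1) (e 0 + 1)

lemma coeff_Hser (g : ℕ → ℕ → R) (a b : ℕ) :
    MvPowerSeries.coeff (fe a b) (Hser g) = if a = 0 then wdef g b 0 else 0 := rfl

lemma coeff_User (g : ℕ → ℕ → R) (a b : ℕ) :
    MvPowerSeries.coeff (fe a b) (User g) = wdef g b (a + 1) := rfl

lemma factor_coeff (g : ℕ → ℕ → R) (hg00 : g 0 0 = 0) (hg10 : g 1 0 = 1) (a b : ℕ) :
    MvPowerSeries.coeff (fe a b) ((X 0 - Hser g) * User g) = g a b := by
  rw [coeff_mul_fe]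
  have hsplit : ∀ i ∈ Finset.range (a + 1), ∀ j ∈ Finset.range (b + 1),
      MvPowerSeries.coeff (fe i j) (X 0 - Hser g) *
        MvPowerSeries.coeff (fe (a - i) (b - j)) (User g)
      = (if i = 1 ∧ j = 0 then wdef g (b - j) ((a - i) + 1) else 0)
        - (if i = 0 then wdef g j 0 * wdef g (b - j) ((a - i) + 1) else 0) := by
    intro i _ j _
    rw [map_sub, coeff_X, coeff_Hser, coeff_User, sub_mul]
    congr 1
    · rcases eq_or_ne (fe i j) (Finsupp.single (0 : Fin 2) 1) with heq | hne
      · rw [fe_single0] at heq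
        obtain ⟨h1, h2⟩ := fe_inj heq
        rw [if_pos (by rw [fe_single0]; exact heq), if_pos ⟨h1, h2⟩, one_mul]
      · rw [if_neg hne, if_neg, zero_mul]
        intro hcond
        exact hne (by rw [hcond.1, hcond.2, fe_single0])
    · by_cases hi : i = 0
      · rw [if_pos hi, if_pos hi]
      · rw [if_neg hi, if_neg hi, zero_mul]
  rw [Finset.sum_congr rfl fun i hi => Finset.sum_congr rfl fun j hj => hsplit i hi j hj]
  rw [Finset.sum_congr rfl fun i (_ : i ∈ Finset.range (a+1)) =>
    (Finset.sum_sub_distrib (s := Finset.range (b+1))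
      (f := fun j => if i = 1 ∧ j = 0 then wdef g (b - j) ((a - i) + 1) else 0)
      (g := fun j => if i = 0 then wdef g j 0 * wdef g (b - j) ((a - i) + 1) else 0)),
    Finset.sum_sub_distrib]
  have hS1 : ∑ i ∈ Finset.range (a + 1), ∑ j ∈ Finset.range (b + 1),
      (if i = 1 ∧ j = 0 then wdef g (b - j) ((a - i) + 1) else 0)
      = if 1 ≤ a then wdef g b a else 0 := by
    by_cases ha : 1 ≤ a
    · rw [if_pos ha]
      rw [Finset.sum_eq_single_of_mem 1 (Finset.mem_range.mpr (by omega))]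
      · rw [Finset.sum_eq_single_of_mem 0 (Finset.mem_range.mpr (by omega))]
        · rw [if_pos ⟨rfl, rfl⟩, show b - 0 = b from rfl, show a - 1 + 1 = a by omega]
        · intro j _ hj
          exact if_neg (fun hc => hj hc.2)
      · intro i _ hi
        exact Finset.sum_eq_zero fun j _ => if_neg (fun hc => hi hc.1)
    · rw [if_neg ha]
      refine Finset.sum_eq_zero fun i hi => Finset.sum_eq_zero fun j _ => if_neg (fun hc => ?_)
      rw [Finset.mem_range] at hi
      omega
  have hS2 : ∑ i ∈ Finset.range (a + 1), ∑ j ∈ Finset.range (b + 1),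
      (if i = 0 then wdef g j 0 * wdef g (b - j) ((a - i) + 1) else 0)
      = ∑ j ∈ Finset.range (b + 1), wdef g j 0 * wdef g (b - j) (a + 1) := by
    rw [Finset.sum_eq_single_of_mem 0 (Finset.mem_range.mpr (by omega))]
    · exact Finset.sum_congr rfl fun j _ => by rw [if_pos rfl, Nat.sub_zero]
    · intro i _ hi
      exact Finset.sum_eq_zero fun j _ => if_neg hi
  rw [hS1, hS2]
  by_cases ha : 1 ≤ a
  · rw [if_pos ha]
    have hu : wdef g b a = g a b + ∑ m ∈ Finset.Icc 1 b, wdef g m 0 * wdef g (b - m) (a + 1) := by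
      have h := wdef_u g b (a - 1)
      rw [show a - 1 + 1 = a by omega] at h
      rw [show a - 1 + 2 = a + 1 by omega] at h
      exact h
    rw [hu, sum_range_succ_eq_Icc (fun j => wdef g j 0 * wdef g (b - j) (a + 1)) b,
      wdef_h0, zero_mul]
    ring
  · rw [if_neg ha]
    have ha0 : a = 0 := by omega
    subst ha0
    simp only [Nat.zero_add]
    rw [sum_range_succ_eq_Icc (fun j => wdef g j 0 * wdef g (b - j) 1) b, wdef_h0, zero_mul,
      zero_add]
    by_cases hb : 1 ≤ b
    · rw [Icc_one_insert hb, Finset.sum_insert not_mem_Icc_one, Nat.sub_self]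
      have h01 : wdef g 0 1 = 1 := by
        rw [wdef_u g 0 0, Finset.Icc_eq_empty (by omega), Finset.sum_empty, hg10, add_zero]
      rw [h01, mul_one, wdef_h g (by omega : b ≠ 0)]
      ring
    · have hb0 : b = 0 := by omega
      subst hb0
      rw [Finset.Icc_eq_empty (by omega), Finset.sum_empty, hg00]
      ring

end Weier

section Extract

lemma fu_inj {m n : ℕ} (h : fu m = fu n) : m = n := by
  have := congrArg (fun d => Finsupp.toFun d ()) h
  simpa [fu, Finsupp.single_eq_same] using congrArg (fun d : Unit →₀ ℕ => d ()) h

lemma constantCoeff_eq_apply (φ : MvPowerSeries σ R) : constantCoeff (σ := σ) (R := R) φ = φ 0 := rfl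

lemma coeff_extract1 (F : MvPowerSeries (Fin 2) R) (n : ℕ) :
    MvPowerSeries.coeff (fu n) (msubst F ![PowerSeries.X, 0]) =
      MvPowerSeries.coeff (fe n 0) F := by
  have ha : ∀ i, constantCoeff (σ := Unit) (R := R)
      ((![PowerSeries.X, 0] : Fin 2 → MvPowerSeries Unit R) i) = 0 := by
    intro i
    fin_cases i
    · show constantCoeff (σ := Unit) (R := R) (MvPowerSeries.X ()) = 0
      exact constantCoeff_X ()
    · exact map_zero _
  rw [coeff_msubst' F _ ha (fu n) (N := n) (le_of_eq (deg_fu n))]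
  rw [Finset.sum_eq_single_of_mem (fe n 0) (mem_box_fe.mpr ⟨le_rfl, Nat.zero_le n⟩)]
  · have hpr : (∏ k, (![PowerSeries.X, 0] : Fin 2 → MvPowerSeries Unit R) k ^ (fe n 0) k)
        = MvPowerSeries.X () ^ n := by
      rw [Fin.prod_univ_two]
      show (PowerSeries.X : MvPowerSeries Unit R) ^ n * (0 : MvPowerSeries Unit R) ^ (0 : ℕ) = _
      rw [pow_zero, mul_one]
      rfl
    rw [hpr, X_pow_eq]
    show MvPowerSeries.coeff (fe n 0) F * MvPowerSeries.coeff (fu n) (monomial (fu n) 1) = _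
    rw [coeff_monomial_same, mul_one]
  · intro e he hne
    rcases eq_or_ne (e 1) 0 with h1 | h1
    · have he0 : e 0 ≠ n := fun hc => hne (by rw [← fe_eta e, h1, hc])
      have hpr : (∏ k, (![PowerSeries.X, 0] : Fin 2 → MvPowerSeries Unit R) k ^ e k)
          = MvPowerSeries.X () ^ (e 0) := by
        rw [Fin.prod_univ_two]
        show (PowerSeries.X : MvPowerSeries Unit R) ^ (e 0) * (0 : MvPowerSeries Unit R) ^ (e 1) = _
        rw [h1, pow_zero, mul_one]
        rfl
      rw [hpr, X_pow_eq, coeff_monomial, if_neg, mul_zero]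
      intro hc
      exact he0 (fu_inj hc).symm
    · have hpr : (∏ k, (![PowerSeries.X, 0] : Fin 2 → MvPowerSeries Unit R) k ^ e k)
          = 0 := by
        rw [Fin.prod_univ_two]
        show (PowerSeries.X : MvPowerSeries Unit R) ^ (e 0) * (0 : MvPowerSeries Unit R) ^ (e 1) = _
        rw [zero_pow h1, mul_zero]
      rw [hpr, map_zero, mul_zero]

lemma coeff_extract_sym (F : MvPowerSeries (Fin 2) R) (a b : ℕ) :
    MvPowerSeries.coeff (fe a b) (msubst F ![MvPowerSeries.X 1, MvPowerSeries.X 0]) =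
      MvPowerSeries.coeff (fe b a) F := by
  have ha : ∀ i, constantCoeff (σ := (Fin 2)) (R := R)
      ((![MvPowerSeries.X 1, MvPowerSeries.X 0] : Fin 2 → MvPowerSeries (Fin 2) R) i) = 0 := by
    intro i
    fin_cases i
    · exact constantCoeff_X 1
    · exact constantCoeff_X 0
  rw [coeff_msubst' F _ ha (fe a b) (N := a + b) (le_of_eq (deg_fe a b))]
  have hpr : ∀ e : Fin 2 →₀ ℕ,
      (∏ k, (![MvPowerSeries.X 1, MvPowerSeries.X 0] : Fin 2 → MvPowerSeries (Fin 2) R) k ^ e k)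
      = monomial (fe (e 1) (e 0)) 1 := by
    intro e
    rw [Fin.prod_univ_two]
    show (MvPowerSeries.X 1 : MvPowerSeries (Fin 2) R) ^ (e 0) * (MvPowerSeries.X 0) ^ (e 1) = _
    rw [mul_comm, X_pow_mul_X_pow]
  rw [Finset.sum_eq_single_of_mem (fe b a)
    (mem_box_fe.mpr ⟨by omega, by omega⟩)]
  · rw [hpr, coeff_monomial]
    simp only [fe_apply0, fe_apply1]
    rw [if_pos trivial, mul_one]
  · intro e he hne
    rw [hpr, coeff_monomial, if_neg, mul_zero]
    intro hc
    obtain ⟨h1, h2⟩ := fe_inj hc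
    exact hne (by rw [← fe_eta e, ← h1, ← h2])

lemma msubst_Hser (g : ℕ → ℕ → R) (s e : MvPowerSeries Unit R)
    (hs : constantCoeff (σ := Unit) (R := R) s = 0) (he : constantCoeff (σ := Unit) (R := R) e = 0) :
    msubst (Hser g) ![s, e] =
      msubst (fun d => wdef g (d ()) 0 : MvPowerSeries Unit R) (fun _ : Unit => e) := by
  have hse : ∀ i, constantCoeff (σ := Unit) (R := R) ((![s, e] : Fin 2 → MvPowerSeries Unit R) i) = 0 := by
    intro i
    fin_cases i
    · exact hs
    · exact he
  have hee : ∀ i : Unit, constantCoeff (σ := Unit) (R := R) ((fun _ : Unit => e) i) = 0 := fun _ => he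
  apply MvPowerSeries.ext; intro d
  erw [coeff_msubst' _ _ hse d le_rfl, coeff_msubst' _ _ hee d le_rfl, sum_box_fe, sum_box_fu]
  have hL : ∀ i ∈ Finset.range (deg d + 1), ∀ j ∈ Finset.range (deg d + 1),
      MvPowerSeries.coeff (fe i j) (Hser g) *
        MvPowerSeries.coeff d (∏ k, (![s, e] : Fin 2 → MvPowerSeries Unit R) k ^ (fe i j) k)
      = if i = 0 then wdef g j 0 * MvPowerSeries.coeff d (e ^ j) else 0 := by
    intro i _ j _
    have hpr : (∏ k, (![s, e] : Fin 2 → MvPowerSeries Unit R) k ^ (fe i j) k) = s ^ i * e ^ j := by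
      rw [Fin.prod_univ_two]
      rfl
    rw [hpr, coeff_Hser]
    by_cases hi : i = 0
    · rw [if_pos hi, if_pos hi, hi, pow_zero, one_mul]
    · rw [if_neg hi, if_neg hi, zero_mul]
  rw [Finset.sum_congr rfl fun i hi => Finset.sum_congr rfl fun j hj => hL i hi j hj]
  rw [Finset.sum_eq_single_of_mem 0 (Finset.mem_range.mpr (by omega))]
  · refine Finset.sum_congr rfl fun j _ => ?_
    rw [if_pos rfl]
    have hc : MvPowerSeries.coeff (fu j) (fun d => wdef g (d ()) 0 : MvPowerSeries Unit R)
        = wdef g j 0 := by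
      erw [MvPowerSeries.coeff_apply]
      show wdef g (fu j ()) 0 = wdef g j 0
      rw [fu_apply]
    have hpr2 : (∏ k : Unit, (fun _ : Unit => e) k ^ (fu j) k) = e ^ j := by
      rw [Fintype.prod_unique]
      show e ^ (fu j ()) = e ^ j
      rw [fu_apply]
    rw [hc, hpr2]
  · intro i _ hi
    exact Finset.sum_eq_zero fun j _ => if_neg hi

end Extract

end FGLaux

/-- If `F` is a formal group law over `R` with formal inverse `ι` (the power series with zero
constant term satisfying `F(X, ι(X)) = 0`), then there is a power series `P` with zero
constant term such that `X + ι(X) = P(X · ι(X))`. -/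
theorem fgl_add_inverse_eq_powerSeries_of_mul_inverse
    {R : Type*} [CommRing R] (F : MvPowerSeries (Fin 2) R) (hF : IsFormalGroupLaw F)
    (ι : PowerSeries R) (hι₀ : PowerSeries.constantCoeff ι = 0)
    (hι : msubst F ![PowerSeries.X, ι] = 0) :
    ∃ P : PowerSeries R, PowerSeries.constantCoeff P = 0 ∧
      PowerSeries.X + ι = msubst P (fun _ : Unit => PowerSeries.X * ι) := by
  classical
  obtain ⟨h1, h2, hsymF, hassoc⟩ := hF
  set c : ℕ → ℕ → R := fun a b => MvPowerSeries.coeff (FGLaux.fe a b) F with hcdef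
  have hsym : ∀ a b, c a b = c b a := by
    intro a b
    have h := congrArg (MvPowerSeries.coeff (FGLaux.fe a b)) hsymF
    rw [FGLaux.coeff_extract_sym] at h
    exact h.symm
  have hc0 : ∀ n, c n 0 = if n = 1 then 1 else 0 := by
    intro n
    have h := congrArg (MvPowerSeries.coeff (FGLaux.fu n)) h1
    rw [FGLaux.coeff_extract1] at h
    refine h.trans ?_
    show MvPowerSeries.coeff (FGLaux.fu n) (MvPowerSeries.X ()) = _
    rw [MvPowerSeries.coeff_X]
    exact if_congr ⟨fun hh => FGLaux.fu_inj hh, fun hh => by subst hh; rfl⟩ rfl rfl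
  set g : ℕ → ℕ → R := fun i j => FGLaux.gdef c j i with hgdef
  have hg00 : g 0 0 = 0 := by
    show FGLaux.gdef c 0 0 = 0
    rw [FGLaux.gdef_eq, Finset.range_zero, Finset.sum_empty, sub_zero]
    simpa using hc0 0
  have hg10 : g 1 0 = 1 := by
    show FGLaux.gdef c 0 1 = 1
    rw [FGLaux.gdef_eq, Finset.range_zero, Finset.sum_empty, sub_zero]
    simpa using hc0 1
  have hGF := FGLaux.msubst_G_eq c hsym F (fun a b => rfl)
  have hfac : (MvPowerSeries.X 0 - FGLaux.Hser g) * FGLaux.User g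
      = (fun e => FGLaux.gdef c (e 1) (e 0) : MvPowerSeries (Fin 2) R) := by
    apply MvPowerSeries.ext; intro e
    erw [← FGLaux.fe_eta e, FGLaux.factor_coeff g hg00 hg10]
    rfl
  have hXc : MvPowerSeries.constantCoeff (σ := Unit) (R := R) PowerSeries.X = 0 :=
    MvPowerSeries.constantCoeff_X ()
  have hιc : MvPowerSeries.constantCoeff (σ := Unit) (R := R) ι = 0 := hι₀
  have hXι : ∀ i, MvPowerSeries.constantCoeff (σ := Unit) (R := R)
      ((![PowerSeries.X, ι] : Fin 2 → MvPowerSeries Unit R) i) = 0 := by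
    intro i
    fin_cases i
    · exact hXc
    · exact hιc
  have hb : ∀ i, MvPowerSeries.constantCoeff (σ := (Fin 2)) (R := R)
      ((![MvPowerSeries.X 0 + MvPowerSeries.X 1, MvPowerSeries.X 0 * MvPowerSeries.X 1] :
        Fin 2 → MvPowerSeries (Fin 2) R) i) = 0 := by
    intro i
    fin_cases i
    · show MvPowerSeries.constantCoeff (σ := (Fin 2)) (R := R) (MvPowerSeries.X 0 + MvPowerSeries.X 1) = 0
      rw [map_add, MvPowerSeries.constantCoeff_X, MvPowerSeries.constantCoeff_X, add_zero]
    · show MvPowerSeries.constantCoeff (σ := (Fin 2)) (R := R) (MvPowerSeries.X 0 * MvPowerSeries.X 1) = 0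
      rw [map_mul, MvPowerSeries.constantCoeff_X, zero_mul]
  have hcomp := FGLaux.msubst_comp
    (fun e => FGLaux.gdef c (e 1) (e 0) : MvPowerSeries (Fin 2) R)
    ![MvPowerSeries.X 0 + MvPowerSeries.X 1, MvPowerSeries.X 0 * MvPowerSeries.X 1]
    ![PowerSeries.X, ι] hb hXι
  rw [hGF, hι] at hcomp
  have hargs : (fun i => msubst ((![MvPowerSeries.X 0 + MvPowerSeries.X 1,
        MvPowerSeries.X 0 * MvPowerSeries.X 1] : Fin 2 → MvPowerSeries (Fin 2) R) i)
        ![PowerSeries.X, ι]) = ![PowerSeries.X + ι, PowerSeries.X * ι] := by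
    funext i
    fin_cases i
    · show msubst (MvPowerSeries.X 0 + MvPowerSeries.X 1) ![PowerSeries.X, ι] = _
      rw [FGLaux.msubst_add _ _ _ hXι, FGLaux.msubst_X 0 _ hXι, FGLaux.msubst_X 1 _ hXι]
      rfl
    · show msubst (MvPowerSeries.X 0 * MvPowerSeries.X 1) ![PowerSeries.X, ι] = _
      rw [FGLaux.msubst_mul _ _ _ hXι, FGLaux.msubst_X 0 _ hXι, FGLaux.msubst_X 1 _ hXι]
      rfl
  rw [hargs] at hcomp
  have hsz : ∀ i, MvPowerSeries.constantCoeff (σ := Unit) (R := R)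
      ((![PowerSeries.X + ι, PowerSeries.X * ι] : Fin 2 → MvPowerSeries Unit R) i) = 0 := by
    intro i
    fin_cases i
    · show MvPowerSeries.constantCoeff (σ := Unit) (R := R) (PowerSeries.X + ι) = 0
      rw [map_add, hXc, hιc, add_zero]
    · show MvPowerSeries.constantCoeff (σ := Unit) (R := R) (PowerSeries.X * ι) = 0
      rw [map_mul, hXc, zero_mul]
  erw [← hfac, FGLaux.msubst_mul _ _ _ hsz, FGLaux.msubst_sub _ _ _ hsz,
    FGLaux.msubst_X 0 _ hsz] at hcomp
  rw [show (![PowerSeries.X + ι, PowerSeries.X * ι] : Fin 2 → MvPowerSeries Unit R) 0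
      = PowerSeries.X + ι from rfl] at hcomp
  rw [FGLaux.msubst_Hser g (PowerSeries.X + ι) (PowerSeries.X * ι)
    (by rw [map_add, hXc, hιc, add_zero]) (by rw [map_mul, hXc, zero_mul])] at hcomp
  set V := msubst (FGLaux.User g) ![PowerSeries.X + ι, PowerSeries.X * ι] with hVdef
  have hV1 : MvPowerSeries.constantCoeff (σ := Unit) (R := R) V = 1 := by
    rw [hVdef, FGLaux.constantCoeff_msubst _ _ hsz]
    show FGLaux.wdef g ((0 : Fin 2 →₀ ℕ) 1) ((0 : Fin 2 →₀ ℕ) 0 + 1) = 1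
    show FGLaux.wdef g 0 (0 + 1) = 1
    rw [FGLaux.wdef_u g 0 0, Finset.Icc_eq_empty (by omega), Finset.sum_empty, add_zero]
    exact hg10
  have hunit := MvPowerSeries.mul_invOfUnit V (1 : Rˣ) (by rw [hV1]; rfl)
  have hzero : (PowerSeries.X + ι) -
      msubst (fun d => FGLaux.wdef g (d ()) 0 : MvPowerSeries Unit R)
        (fun _ : Unit => PowerSeries.X * ι) = 0 := by
    have h := congrArg (fun z => z * MvPowerSeries.invOfUnit V 1) hcomp
    simp only [zero_mul] at h
    rw [mul_assoc, hunit, mul_one] at h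
    exact h.symm
  refine ⟨(fun d => FGLaux.wdef g (d ()) 0 : MvPowerSeries Unit R), ?_, ?_⟩
  · show FGLaux.wdef g ((0 : Unit →₀ ℕ) ()) 0 = 0
    show FGLaux.wdef g 0 0 = 0
    exact FGLaux.wdef_h0 g
  · rw [← sub_eq_zero]
    exact hzero
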